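/- Let r ≥ 2, let 0 < d̃₀ < d̃₁ < ⋯ < d̃_{r−1} < 1, let CFS₀ ∈ (0, d̃₀], CFS₁ ∈ [d̃_{r−1}, 1), k₀ ∈ [0, d̃₀/CFS₀], and k₁ ∈ [0, (1 − d̃_{r−1})/(1 − CFS₁)]. Define the MOP-WENO-ACMk mapping function g on [0,1] by g(ω) = k₀ω for ω ∈ [0, CFS₀); g(ω) = d̃₀ for ω ∈ [CFS₀, (d̃₀+d̃₁)/2); g(ω) = d̃_i for ω ∈ [(d̃_{i−1}+d̃_i)/2, (d̃_i+d̃_{i+1})/2) for each 1 ≤ i ≤ r−2; g(ω) = d̃_{r−1} for ω ∈ [(d̃_{r−2}+d̃_{r−1})/2, CFS₁]; and g(ω) = 1 − k₁(1 − ω) for ω ∈ (CFS₁, 1]. Then g is monotone non-decreasing on [0,1]; consequently the family of identical mapping functions g_s = g (s = 0,…,r−1) is order-preserving: for all ω_a, ω_b ∈ [0,1] with ω_a ≥ ω_b and all indices m, n, one has g_m(ω_a) ≥ g_n(ω_b). -/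
import Mathlib


/-- The MOP-WENO-ACMk mapping function g (built from the sorted
ideal weights d̃₀ < ⋯ < d̃_{r−1}, thresholds CFS₀, CFS₁ and slopes k₀, k₁) is
monotone non-decreasing on [0,1]; consequently the family of identical mapping
functions g_s = g (s = 0,…,r−1) is order-preserving: ω_a ≥ ω_b implies
g_m(ω_a) ≥ g_n(ω_b) for all indices m, n. -/
theorem mopWenoACMk_monotone_order_preserving
    (r : ℕ) (hr : 2 ≤ r) (dt : ℕ → ℝ)
    (hdt0 : 0 < dt 0) (hdtr : dt (r-1) < 1)
    (hdtmono : ∀ i : ℕ, i + 1 ≤ r - 1 → dt i < dt (i+1))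
    (CFS0 CFS1 k0 k1 : ℝ)
    (hCFS0 : 0 < CFS0) (hCFS0' : CFS0 ≤ dt 0)
    (hCFS1 : dt (r-1) ≤ CFS1) (hCFS1' : CFS1 < 1)
    (hk0 : 0 ≤ k0) (hk0' : k0 ≤ dt 0 / CFS0)
    (hk1 : 0 ≤ k1) (hk1' : k1 ≤ (1 - dt (r-1)) / (1 - CFS1))
    (g : ℝ → ℝ)
    (hg1 : ∀ ω : ℝ, 0 ≤ ω → ω < CFS0 → g ω = k0 * ω)
    (hg2 : ∀ ω : ℝ, CFS0 ≤ ω → ω < (dt 0 + dt 1)/2 → g ω = dt 0)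
    (hg3 : ∀ i : ℕ, 1 ≤ i → i ≤ r - 2 →
      ∀ ω : ℝ, (dt (i-1) + dt i)/2 ≤ ω → ω < (dt i + dt (i+1))/2 → g ω = dt i)
    (hg4 : ∀ ω : ℝ, (dt (r-2) + dt (r-1))/2 ≤ ω → ω ≤ CFS1 → g ω = dt (r-1))
    (hg5 : ∀ ω : ℝ, CFS1 < ω → ω ≤ 1 → g ω = 1 - k1 * (1 - ω))
    (gs : Fin r → ℝ → ℝ) (hgs : ∀ s : Fin r, gs s = g) :
    (∀ ω₁ ∈ Set.Icc (0:ℝ) 1, ∀ ω₂ ∈ Set.Icc (0:ℝ) 1, ω₁ ≤ ω₂ → g ω₁ ≤ g ω₂) ∧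
    (∀ m n : Fin r, ∀ ωa ∈ Set.Icc (0:ℝ) 1, ∀ ωb ∈ Set.Icc (0:ℝ) 1,
      ωb ≤ ωa → gs n ωb ≤ gs m ωa) := by
  have hr1 : 1 ≤ r - 1 := by omega
  -- dt is monotone on indices ≤ r-1
  have dtmono : ∀ j, j ≤ r - 1 → ∀ i, i ≤ j → dt i ≤ dt j := by
    intro j
    induction j with
    | zero =>
      intro _ i hi
      interval_cases i
      exact le_rfl
    | succ n ih =>
      intro hj i hi
      rcases Nat.lt_or_ge i (n+1) with h | h
      · have h1 : dt i ≤ dt n := ih (by omega) i (by omega)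
        have h2 : dt n < dt (n+1) := hdtmono n hj
        linarith
      · have : i = n + 1 := by omega
        rw [this]
  -- the left endpoints of the constant pieces
  set m : ℕ → ℝ := fun i => if i = 0 then CFS0 else (dt (i-1) + dt i)/2 with hm
  have hm0 : m 0 = CFS0 := by simp [hm]
  have hms : ∀ i, 1 ≤ i → m i = (dt (i-1) + dt i)/2 := by
    intro i hi; simp [hm]; omega
  have mlt : ∀ i, i + 1 ≤ r - 1 → m i < m (i+1) := by
    intro i hi
    rcases Nat.eq_zero_or_pos i with h0 | h0
    · subst h0
      have h01 : dt 0 < dt 1 := hdtmono 0 hi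
      rw [hm0, hms 1 le_rfl]
      simp only [Nat.sub_self]
      linarith
    · have h1 : dt (i-1) < dt i := by
        have := hdtmono (i-1) (by omega)
        have heq : i - 1 + 1 = i := by omega
        rwa [heq] at this
      have h2 : dt i < dt (i+1) := hdtmono i hi
      rw [hms i h0, hms (i+1) (by omega)]
      have heq : i + 1 - 1 = i := by omega
      rw [heq]
      linarith
  have mmono : ∀ j, j ≤ r - 1 → ∀ i, i ≤ j → m i ≤ m j := by
    intro j
    induction j with
    | zero => intro _ i hi; interval_cases i; exact le_rfl
    | succ n ih =>
      intro hj i hi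
      rcases Nat.lt_or_ge i (n+1) with h | h
      · have h1 : m i ≤ m n := ih (by omega) i (by omega)
        have h2 : m n < m (n+1) := mlt n hj
        linarith
      · have : i = n + 1 := by omega
        rw [this]
  -- the value of g on each constant piece
  have seg : ∀ i, i ≤ r - 1 → ∀ ω : ℝ, m i ≤ ω → ω ≤ CFS1 →
      (i = r - 1 ∨ ω < m (i+1)) → g ω = dt i := by
    intro i hi ω hlo hhi hcase
    rcases Nat.eq_or_lt_of_le hi with hieq | hilt
    · -- i = r - 1 : use hg4
      subst hieq
      apply hg4 ω _ hhi
      have := hms (r-1) hr1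
      rw [this] at hlo
      have heq : r - 1 - 1 = r - 2 := by omega
      rwa [heq] at hlo
    · have hup : ω < m (i+1) := by
        rcases hcase with h | h
        · omega
        · exact h
      rcases Nat.eq_zero_or_pos i with h0 | h0
      · subst h0
        rw [hm0] at hlo
        rw [hms 1 le_rfl] at hup
        simp only [Nat.sub_self] at hup
        exact hg2 ω hlo hup
      · rw [hms i h0] at hlo
        rw [hms (i+1) (by omega)] at hup
        have heq : i + 1 - 1 = i := by omega
        rw [heq] at hup
        exact hg3 i h0 (by omega) ω hlo hup
  -- classification: every ω ∈ [CFS0, CFS1] lies in some constant piece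
  have classify : ∀ ω : ℝ, CFS0 ≤ ω → ∃ i, i ≤ r - 1 ∧ m i ≤ ω ∧
      (i = r - 1 ∨ ω < m (i+1)) := by
    intro ω hω
    have key : ∀ k i, i + k = r - 1 → m i ≤ ω → ∃ j, j ≤ r - 1 ∧ m j ≤ ω ∧
        (j = r - 1 ∨ ω < m (j+1)) := by
      intro k
      induction k with
      | zero =>
        intro i hik hmi
        exact ⟨i, by omega, hmi, Or.inl (by omega)⟩
      | succ n ih =>
        intro i hik hmi
        rcases lt_or_ge ω (m (i+1)) with h | h
        · exact ⟨i, by omega, hmi, Or.inr h⟩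
        · exact ih (i+1) (by omega) h
    exact key (r-1) 0 (by omega) (by rw [hm0]; exact hω)
  -- basic numeric bounds
  have hk0b : k0 * CFS0 ≤ dt 0 := (le_div_iff₀ hCFS0).mp hk0'
  have hk1b : k1 * (1 - CFS1) ≤ 1 - dt (r-1) := (le_div_iff₀ (by linarith)).mp hk1'
  -- main monotonicity claim
  have mono : ∀ ω₁ ∈ Set.Icc (0:ℝ) 1, ∀ ω₂ ∈ Set.Icc (0:ℝ) 1, ω₁ ≤ ω₂ → g ω₁ ≤ g ω₂ := by
    rintro ω₁ ⟨h10, h11⟩ ω₂ ⟨h20, h21⟩ h12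
    rcases lt_or_ge ω₁ CFS0 with c1 | c1
    · rcases lt_or_ge ω₂ CFS0 with c2 | c2
      · rw [hg1 ω₁ h10 c1, hg1 ω₂ h20 c2]
        nlinarith
      · rcases le_or_gt ω₂ CFS1 with c2' | c2'
        · obtain ⟨j, hj, hmj, hcj⟩ := classify ω₂ c2
          rw [hg1 ω₁ h10 c1, seg j hj ω₂ hmj c2' hcj]
          have h0j : dt 0 ≤ dt j := dtmono j hj 0 (Nat.zero_le _)
          nlinarith
        · rw [hg1 ω₁ h10 c1, hg5 ω₂ c2' h21]
          have h1 : k1 * (1 - ω₂) ≤ k1 * (1 - CFS1) :=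
            mul_le_mul_of_nonneg_left (by linarith) hk1
          have h2 : dt 0 ≤ dt (r-1) := dtmono (r-1) le_rfl 0 (Nat.zero_le _)
          nlinarith
    · rcases le_or_gt ω₁ CFS1 with c1' | c1'
      · obtain ⟨i, hi, hmi, hci⟩ := classify ω₁ c1
        rcases le_or_gt ω₂ CFS1 with c2' | c2'
        · obtain ⟨j, hj, hmj, hcj⟩ := classify ω₂ (le_trans c1 h12)
          rw [seg i hi ω₁ hmi c1' hci, seg j hj ω₂ hmj c2' hcj]
          have hij : i ≤ j := by
            by_contra hc
            push_neg at hc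
            rcases hcj with h | h
            · omega
            · have : m (j+1) ≤ m i := mmono i hi (j+1) (by omega)
              linarith
          exact dtmono j hj i hij
        · rw [seg i hi ω₁ hmi c1' hci, hg5 ω₂ c2' h21]
          have h1 : dt i ≤ dt (r-1) := dtmono (r-1) le_rfl i hi
          have h2 : k1 * (1 - ω₂) ≤ k1 * (1 - CFS1) :=
            mul_le_mul_of_nonneg_left (by linarith) hk1
          linarith
      · have c2' : CFS1 < ω₂ := lt_of_lt_of_le c1' h12
        rw [hg5 ω₁ c1' h11, hg5 ω₂ c2' h21]
        nlinarith
  refine ⟨mono, ?_⟩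
  intro m' n ωa ha ωb hb hba
  rw [hgs m', hgs n]
  exact mono ωb hb ωa ha hba
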